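/- arXiv:1501.06131 — 3 statements merged into one kernel-verified Lean document; each statement's English description precedes it below -/
import Mathlib

section
/- Let q : (0,∞) → (0,∞) be three times continuously differentiable with q'(x) < 0 and q'''(x) < 0 for all x > 0, and suppose q(x) → 0 and q'(x) → 0 as x → ∞. Then for every x > 0, q'(x)² ≤ 2 q''(x) q(x). -/
open Set Filter

/-- If `q` is three times continuously differentiable on `(0,∞)` with `q' < 0` and
`q''' < 0` there, and `q(x) → 0`, `q'(x) → 0` as `x → ∞`, then `q'(x)² ≤ 2 q''(x) q(x)`
for every `x > 0`. -/
theorem deriv_sq_le_two_mul_deriv2_mul_self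
    (q : ℝ → ℝ)
    (hq : ContDiffOn ℝ 3 q (Ioi 0))
    (hq' : ∀ x > (0 : ℝ), deriv q x < 0)
    (hq''' : ∀ x > (0 : ℝ), deriv (deriv (deriv q)) x < 0)
    (hlim : Tendsto q atTop (nhds 0))
    (hlim' : Tendsto (deriv q) atTop (nhds 0)) :
    ∀ x > (0 : ℝ), (deriv q x) ^ 2 ≤ 2 * deriv (deriv q) x * q x := by
  have hopen : IsOpen (Ioi (0:ℝ)) := isOpen_Ioi
  have hd1 : DifferentiableOn ℝ q (Ioi 0) := hq.differentiableOn (by norm_num)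
  have hc2 : ContDiffOn ℝ 2 (deriv q) (Ioi 0) :=
    hq.deriv_of_isOpen hopen (by norm_num)
  have hd2 : DifferentiableOn ℝ (deriv q) (Ioi 0) := hc2.differentiableOn (by norm_num)
  have hc1 : ContDiffOn ℝ 1 (deriv (deriv q)) (Ioi 0) :=
    hc2.deriv_of_isOpen hopen (by norm_num)
  have hd3 : DifferentiableOn ℝ (deriv (deriv q)) (Ioi 0) :=
    hc1.differentiableOn (by norm_num)
  -- HasDerivAt facts
  have H1 : ∀ x ∈ Ioi (0:ℝ), HasDerivAt q (deriv q x) x := fun x hx =>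
    (hd1.differentiableAt (hopen.mem_nhds hx)).hasDerivAt
  have H2 : ∀ x ∈ Ioi (0:ℝ), HasDerivAt (deriv q) (deriv (deriv q) x) x := fun x hx =>
    (hd2.differentiableAt (hopen.mem_nhds hx)).hasDerivAt
  have H3 : ∀ x ∈ Ioi (0:ℝ), HasDerivAt (deriv (deriv q)) (deriv (deriv (deriv q)) x) x :=
    fun x hx => (hd3.differentiableAt (hopen.mem_nhds hx)).hasDerivAt
  -- q is strictly decreasing on (0,∞)
  have hqanti : StrictAntiOn q (Ioi 0) := by
    apply strictAntiOn_of_deriv_neg (convex_Ioi 0) hq.continuousOn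
    intro x hx
    rw [interior_Ioi] at hx
    exact hq' x hx
  -- q > 0 on (0,∞)
  have hqpos : ∀ x > (0:ℝ), 0 < q x := by
    intro x hx
    have h1 : q (x + 1) < q x := hqanti hx (by simp only [mem_Ioi]; linarith) (by linarith)
    have h2 : 0 ≤ q (x + 1) := by
      apply le_of_tendsto hlim
      filter_upwards [eventually_ge_atTop (x + 2)] with y hy
      exact le_of_lt (hqanti (by simp only [mem_Ioi]; linarith) (by simp only [mem_Ioi]; linarith) (by linarith))
    linarith
  -- q'' is strictly decreasing on (0,∞)
  have hq2anti : StrictAntiOn (deriv (deriv q)) (Ioi 0) := by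
    apply strictAntiOn_of_deriv_neg (convex_Ioi 0) hc1.continuousOn
    intro x hx
    rw [interior_Ioi] at hx
    exact hq''' x hx
  -- q'' > 0 on (0,∞)
  have hq2pos : ∀ x > (0:ℝ), 0 < deriv (deriv q) x := by
    intro x hx
    by_contra hcon
    push_neg at hcon
    have hanti' : StrictAntiOn (deriv q) (Ici x) := by
      apply strictAntiOn_of_deriv_neg (convex_Ici x)
      · exact hc2.continuousOn.mono (fun y hy => lt_of_lt_of_le hx hy)
      · intro y hy
        rw [interior_Ici] at hy
        calc deriv (deriv q) y < deriv (deriv q) x :=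
              hq2anti (mem_Ioi.2 hx) (mem_Ioi.2 (lt_trans hx hy)) hy
          _ ≤ 0 := hcon
    have h2 : (0:ℝ) ≤ deriv q (x + 1) := by
      apply le_of_tendsto hlim'
      filter_upwards [eventually_ge_atTop (x + 2)] with y hy
      exact le_of_lt (hanti' (by simp only [mem_Ici]; linarith) (by simp only [mem_Ici]; linarith)
        (by linarith))
    exact absurd h2 (not_le.2 (hq' (x + 1) (by linarith)))
  -- h = q'^2 - 2 q'' q has derivative -2 q''' q > 0 on (0,∞)
  set h : ℝ → ℝ := fun x => (deriv q x) ^ 2 - 2 * deriv (deriv q) x * q x with hh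
  have hder : ∀ x ∈ Ioi (0:ℝ),
      HasDerivAt h (-2 * deriv (deriv (deriv q)) x * q x) x := by
    intro x hx
    have h1 := H1 x hx
    have h2 := H2 x hx
    have h3 := H3 x hx
    have := ((h2.pow 2).sub (((h3.const_mul 2).mul h1)))
    have e : h = deriv q ^ 2 - (fun y => 2 * deriv (deriv q) y) * q := by
      funext y; simp [hh]
    rw [e]
    exact this.congr_deriv (by rw [show (2:ℕ) - 1 = 1 from rfl]; push_cast; ring)
  have hcont : ContinuousOn h (Ioi 0) := by
    apply ContinuousOn.sub
    · exact (hc2.continuousOn.pow 2)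
    · exact (continuousOn_const.mul hc1.continuousOn).mul hq.continuousOn
  have hmono : StrictMonoOn h (Ioi 0) := by
    apply strictMonoOn_of_deriv_pos (convex_Ioi 0) hcont
    intro x hx
    rw [interior_Ioi] at hx
    rw [(hder x hx).deriv]
    have := hq''' x hx
    have := hqpos x hx
    nlinarith
  -- h tends to 0 at infinity
  have hbdd : Tendsto (fun x => deriv (deriv q) x * q x) atTop (nhds 0) := by
    apply squeeze_zero' (g := fun x => deriv (deriv q) 1 * q x)
    · filter_upwards [eventually_ge_atTop (1:ℝ)] with y hy
      exact le_of_lt (mul_pos (hq2pos y (by linarith)) (hqpos y (by linarith)))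
    · filter_upwards [eventually_gt_atTop (1:ℝ)] with y hy
      have h1 : deriv (deriv q) y ≤ deriv (deriv q) 1 :=
        le_of_lt (hq2anti (mem_Ioi.2 one_pos) (mem_Ioi.2 (by linarith)) hy)
      have h2 : 0 ≤ q y := le_of_lt (hqpos y (by linarith))
      exact mul_le_mul_of_nonneg_right h1 h2
    · simpa using hlim.const_mul (deriv (deriv q) 1)
  have hlimh : Tendsto h atTop (nhds 0) := by
    have h1 : Tendsto (fun x => (deriv q x) ^ 2) atTop (nhds 0) := by
      simpa using hlim'.pow 2
    have h2 : Tendsto (fun x => 2 * deriv (deriv q) x * q x) atTop (nhds 0) := by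
      have := hbdd.const_mul 2
      simp only [mul_zero] at this
      convert this using 2 with x
      ring
    simpa using h1.sub h2
  -- conclude
  intro x hx
  have hle : h x ≤ 0 := by
    apply ge_of_tendsto hlimh
    filter_upwards [eventually_gt_atTop x, eventually_gt_atTop (0:ℝ)] with y hy hy0
    exact le_of_lt (hmono (mem_Ioi.2 hx) (mem_Ioi.2 hy0) hy)
  simp only [hh] at hle
  linarith
end

section
/- Let μ be a probability measure on (0,∞) with ∫_0^∞ s^{-5/2} μ(ds) < ∞, define q(x) = ∫_0^∞ (4πs)^{-1/2} e^{-x/(4s)} μ(ds) and p(x) = q(x²). Then ∫_ℝ p'(x)²/p(x) dx ≤ 8 ∫_0^∞ √x · q''(x) dx. -/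
open Set MeasureTheory Real
open scoped ENNReal

set_option linter.unusedVariables false
set_option linter.unusedSectionVars false

namespace FisherAux

noncomputable def Ff (x s : ℝ) : ℝ := (4 * π * s) ^ (-(1 : ℝ)/2) * Real.exp (-x / (4 * s))

noncomputable def Q0 (μ : Measure ℝ) (x : ℝ) : ℝ := ∫ s, Ff x s ∂μ
noncomputable def Q1 (μ : Measure ℝ) (x : ℝ) : ℝ := ∫ s, -(1/(4*s) * Ff x s) ∂μ
noncomputable def Q2 (μ : Measure ℝ) (x : ℝ) : ℝ := ∫ s, 1/(16*s^2) * Ff x s ∂μ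

lemma ae_pos (μ : Measure ℝ) (hsupp : μ (Iic 0) = 0) : ∀ᵐ s ∂μ, 0 < s := by
  rw [MeasureTheory.ae_iff]
  simpa [Set.Iic, not_lt] using hsupp

lemma pow_bound {r s : ℝ} (hr0 : 0 ≤ r) (hr : r ≤ 5/2) (hs : 0 < s) :
    s ^ (-r) ≤ 1 + s ^ (-(5:ℝ)/2) := by
  have h52 : (-(5:ℝ)/2) = -(5/2 : ℝ) := by norm_num
  rw [h52]
  rcases le_or_gt 1 s with h1 | h1
  · have h := Real.rpow_le_rpow_of_exponent_le h1 (show -r ≤ (0:ℝ) by linarith)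
    have h2 : (0:ℝ) ≤ s ^ (-(5/2:ℝ)) := Real.rpow_nonneg hs.le _
    rw [Real.rpow_zero] at h
    linarith
  · have h := Real.rpow_le_rpow_of_exponent_ge hs h1.le (show -(5/2:ℝ) ≤ -r by linarith)
    linarith

lemma Ff_pos {x s : ℝ} (hs : 0 < s) : 0 < Ff x s := by
  have : (0:ℝ) < 4 * π * s := by positivity
  exact mul_pos (Real.rpow_pos_of_pos this _) (Real.exp_pos _)

lemma Ff_le {x s : ℝ} (hx : 0 ≤ x) (hs : 0 < s) : Ff x s ≤ s ^ (-(1:ℝ)/2) := by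
  have h1 : Real.exp (-x / (4 * s)) ≤ 1 := by
    apply Real.exp_le_one_iff.2
    have : (0:ℝ) ≤ x / (4*s) := by positivity
    rw [neg_div]; linarith
  have h2 : (4 * π * s) ^ (-(1:ℝ)/2) ≤ s ^ (-(1:ℝ)/2) := by
    apply Real.rpow_le_rpow_of_nonpos hs
    · nlinarith [Real.pi_gt_three]
    · norm_num
  have h3 : (0:ℝ) < (4 * π * s) ^ (-(1:ℝ)/2) := Real.rpow_pos_of_pos (by positivity) _
  calc Ff x s ≤ (4 * π * s) ^ (-(1:ℝ)/2) * 1 := by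
        exact mul_le_mul_of_nonneg_left h1 h3.le
    _ = (4 * π * s) ^ (-(1:ℝ)/2) := mul_one _
    _ ≤ s ^ (-(1:ℝ)/2) := h2

lemma rpow32 {s : ℝ} (hs : 0 < s) : s ^ (-(1:ℝ)/2) * s⁻¹ = s ^ (-(3:ℝ)/2) := by
  rw [← Real.rpow_neg_one s, ← Real.rpow_add hs]; norm_num

lemma rpow52 {s : ℝ} (hs : 0 < s) : s ^ (-(1:ℝ)/2) * (s^2)⁻¹ = s ^ (-(5:ℝ)/2) := by
  rw [← Real.rpow_natCast s 2, ← Real.rpow_neg hs.le, ← Real.rpow_add hs]; norm_num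

variable {μ : Measure ℝ} [IsProbabilityMeasure μ]

lemma integrable_of_bound (hsupp : μ (Iic 0) = 0)
    (hint : Integrable (fun s : ℝ => s ^ (-(5 : ℝ)/2)) μ)
    {f : ℝ → ℝ} (hm : AEStronglyMeasurable f μ) {C r : ℝ} (hC : 0 ≤ C) (hr0 : 0 ≤ r)
    (hr : r ≤ 5/2) (hb : ∀ s, 0 < s → |f s| ≤ C * s ^ (-r)) : Integrable f μ := by
  have hg : Integrable (fun s => C * (1 + s ^ (-(5:ℝ)/2))) μ :=
    ((integrable_const 1).add hint).const_mul C
  refine hg.mono' hm ?_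
  filter_upwards [ae_pos μ hsupp] with s hs
  calc ‖f s‖ = |f s| := rfl
    _ ≤ C * s ^ (-r) := hb s hs
    _ ≤ C * (1 + s ^ (-(5:ℝ)/2)) := mul_le_mul_of_nonneg_left (pow_bound hr0 hr hs) hC

lemma measF (x : ℝ) : Measurable (fun s => Ff x s) := by unfold Ff; fun_prop

lemma intF (hsupp : μ (Iic 0) = 0) (hint : Integrable (fun s : ℝ => s ^ (-(5 : ℝ)/2)) μ)
    {x : ℝ} (hx : 0 ≤ x) : Integrable (fun s => Ff x s) μ := by
  refine integrable_of_bound hsupp hint (measF x).aestronglyMeasurable (C := 1)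
    (r := (1:ℝ)/2) zero_le_one (by norm_num) (by norm_num) (fun s hs => ?_)
  rw [abs_of_pos (Ff_pos hs), one_mul]
  have : -(1/2 : ℝ) = -(1:ℝ)/2 := by norm_num
  rw [this]
  exact Ff_le hx hs

lemma intF1 (hsupp : μ (Iic 0) = 0) (hint : Integrable (fun s : ℝ => s ^ (-(5 : ℝ)/2)) μ)
    {x : ℝ} (hx : 0 ≤ x) : Integrable (fun s => 1/(4*s) * Ff x s) μ := by
  refine integrable_of_bound hsupp hint (by apply Measurable.aestronglyMeasurable; unfold Ff; fun_prop)
    (C := 1/4) (r := (3:ℝ)/2) (by norm_num) (by norm_num) (by norm_num) (fun s hs => ?_)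
  have h1 : |1/(4*s) * Ff x s| = 1/(4*s) * Ff x s := abs_of_pos (mul_pos (by positivity) (Ff_pos hs))
  rw [h1]
  have h2 : 1/(4*s) * Ff x s ≤ 1/(4*s) * s ^ (-(1:ℝ)/2) :=
    mul_le_mul_of_nonneg_left (Ff_le hx hs) (by positivity)
  have h3 : 1/(4*s) * s ^ (-(1:ℝ)/2) = 1/4 * (s ^ (-(1:ℝ)/2) * s⁻¹) := by ring
  have : -(3/2 : ℝ) = -(3:ℝ)/2 := by norm_num
  rw [this]
  rw [h3, rpow32 hs] at h2
  exact h2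

lemma intF2 (hsupp : μ (Iic 0) = 0) (hint : Integrable (fun s : ℝ => s ^ (-(5 : ℝ)/2)) μ)
    {x : ℝ} (hx : 0 ≤ x) : Integrable (fun s => 1/(16*s^2) * Ff x s) μ := by
  refine integrable_of_bound hsupp hint (by apply Measurable.aestronglyMeasurable; unfold Ff; fun_prop)
    (C := 1/16) (r := (5:ℝ)/2) (by norm_num) (by norm_num) (by norm_num) (fun s hs => ?_)
  have h1 : |1/(16*s^2) * Ff x s| = 1/(16*s^2) * Ff x s := abs_of_pos (mul_pos (by positivity) (Ff_pos hs))
  rw [h1]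
  have h2 : 1/(16*s^2) * Ff x s ≤ 1/(16*s^2) * s ^ (-(1:ℝ)/2) :=
    mul_le_mul_of_nonneg_left (Ff_le hx hs) (by positivity)
  have h3 : 1/(16*s^2) * s ^ (-(1:ℝ)/2) = 1/16 * (s ^ (-(1:ℝ)/2) * (s^2)⁻¹) := by ring
  have : -(5/2 : ℝ) = -(5:ℝ)/2 := by norm_num
  rw [this]
  rw [h3, rpow52 hs] at h2
  exact h2

lemma bnd1 {x s : ℝ} (hx : 0 ≤ x) (hs : 0 < s) :
    1/(4*s) * Ff x s ≤ 1/4 * s ^ (-(3:ℝ)/2) := by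
  have h2 : 1/(4*s) * Ff x s ≤ 1/(4*s) * s ^ (-(1:ℝ)/2) :=
    mul_le_mul_of_nonneg_left (Ff_le hx hs) (by positivity)
  have h3 : 1/(4*s) * s ^ (-(1:ℝ)/2) = 1/4 * (s ^ (-(1:ℝ)/2) * s⁻¹) := by ring
  rw [h3, rpow32 hs] at h2; exact h2

lemma bnd2 {x s : ℝ} (hx : 0 ≤ x) (hs : 0 < s) :
    1/(16*s^2) * Ff x s ≤ 1/16 * s ^ (-(5:ℝ)/2) := by
  have h2 : 1/(16*s^2) * Ff x s ≤ 1/(16*s^2) * s ^ (-(1:ℝ)/2) :=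
    mul_le_mul_of_nonneg_left (Ff_le hx hs) (by positivity)
  have h3 : 1/(16*s^2) * s ^ (-(1:ℝ)/2) = 1/16 * (s ^ (-(1:ℝ)/2) * (s^2)⁻¹) := by ring
  rw [h3, rpow52 hs] at h2; exact h2

lemma hasDerivAt_Ff {s : ℝ} (hs : 0 < s) (x : ℝ) :
    HasDerivAt (fun x => Ff x s) (-(1/(4*s) * Ff x s)) x := by
  have h : HasDerivAt (fun x : ℝ => -x / (4*s)) (-1/(4*s)) x := by
    simpa using ((hasDerivAt_id x).neg.div_const (4*s))
  have h2 := (h.exp).const_mul ((4*π*s) ^ (-(1:ℝ)/2))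
  refine h2.congr_deriv ?_
  unfold Ff; ring

lemma hasDerivAt_Ff1 {s : ℝ} (hs : 0 < s) (x : ℝ) :
    HasDerivAt (fun x => -(1/(4*s) * Ff x s)) (1/(16*s^2) * Ff x s) x := by
  have h2 := ((hasDerivAt_Ff hs x).const_mul (1/(4*s))).neg
  have hs0 : s ≠ 0 := ne_of_gt hs
  refine h2.congr_deriv ?_
  ring

lemma ball_pos {x0 x : ℝ} (hx0 : 0 < x0) (hx : x ∈ Metric.ball x0 (x0/2)) : 0 < x := by
  rw [Metric.mem_ball, Real.dist_eq, abs_lt] at hx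
  linarith [hx.1]

lemma hasDerivAt_Q0 (hsupp : μ (Iic 0) = 0)
    (hint : Integrable (fun s : ℝ => s ^ (-(5 : ℝ)/2)) μ)
    {x0 : ℝ} (hx0 : 0 < x0) : HasDerivAt (Q0 μ) (Q1 μ x0) x0 := by
  have key := hasDerivAt_integral_of_dominated_loc_of_deriv_le (μ := μ)
    (F := fun x s => Ff x s) (F' := fun x s => -(1/(4*s) * Ff x s))
    (x₀ := x0) (s := Metric.ball x0 (x0/2)) (bound := fun s => 1/4 * (1 + s ^ (-(5:ℝ)/2)))
    (Metric.ball_mem_nhds _ (by linarith))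
    (Filter.Eventually.of_forall fun x => (measF x).aestronglyMeasurable)
    (intF hsupp hint hx0.le)
    ((intF1 hsupp hint hx0.le).neg.aestronglyMeasurable)
    ?bound (((integrable_const 1).add hint).const_mul (1/4)) ?diff
  · exact key.2
  case bound =>
    filter_upwards [ae_pos μ hsupp] with s hs
    intro x hx
    have hxpos := ball_pos hx0 hx
    rw [Real.norm_eq_abs, abs_neg, abs_of_pos (mul_pos (by positivity) (Ff_pos hs))]
    calc 1/(4*s) * Ff x s ≤ 1/4 * s ^ (-(3:ℝ)/2) := bnd1 hxpos.le hs
      _ ≤ 1/4 * (1 + s ^ (-(5:ℝ)/2)) := by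
          have := pow_bound (r := (3:ℝ)/2) (by norm_num) (by norm_num) hs
          have h32 : -(3/2:ℝ) = -(3:ℝ)/2 := by norm_num
          rw [h32] at this; linarith
  case diff =>
    filter_upwards [ae_pos μ hsupp] with s hs
    intro x _
    exact hasDerivAt_Ff hs x

lemma hasDerivAt_Q1 (hsupp : μ (Iic 0) = 0)
    (hint : Integrable (fun s : ℝ => s ^ (-(5 : ℝ)/2)) μ)
    {x0 : ℝ} (hx0 : 0 < x0) : HasDerivAt (Q1 μ) (Q2 μ x0) x0 := by
  have key := hasDerivAt_integral_of_dominated_loc_of_deriv_le (μ := μ)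
    (F := fun x s => -(1/(4*s) * Ff x s)) (F' := fun x s => 1/(16*s^2) * Ff x s)
    (x₀ := x0) (s := Metric.ball x0 (x0/2)) (bound := fun s => 1/16 * (1 + s ^ (-(5:ℝ)/2)))
    (Metric.ball_mem_nhds _ (by linarith))
    (Filter.Eventually.of_forall fun x => by
      apply Measurable.aestronglyMeasurable
      show Measurable (fun s => -(1/(4*s) * Ff x s))
      unfold Ff
      fun_prop)
    (intF1 hsupp hint hx0.le).neg
    ((intF2 hsupp hint hx0.le).aestronglyMeasurable)
    ?bound (((integrable_const 1).add hint).const_mul (1/16)) ?diff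
  · exact key.2
  case bound =>
    filter_upwards [ae_pos μ hsupp] with s hs
    intro x hx
    have hxpos := ball_pos hx0 hx
    rw [Real.norm_eq_abs, abs_of_pos (mul_pos (by positivity) (Ff_pos hs))]
    calc 1/(16*s^2) * Ff x s ≤ 1/16 * s ^ (-(5:ℝ)/2) := bnd2 hxpos.le hs
      _ ≤ 1/16 * (1 + s ^ (-(5:ℝ)/2)) := by
          have : (0:ℝ) < s ^ (-(5:ℝ)/2) := Real.rpow_pos_of_pos hs _
          linarith
  case diff =>
    filter_upwards [ae_pos μ hsupp] with s hs
    intro x _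
    exact hasDerivAt_Ff1 hs x

lemma Q0_pos (hsupp : μ (Iic 0) = 0) (hint : Integrable (fun s : ℝ => s ^ (-(5 : ℝ)/2)) μ)
    {x : ℝ} (hx : 0 ≤ x) : 0 < Q0 μ x := by
  have hi := intF hsupp hint hx
  have hnn : 0 ≤ᵐ[μ] fun s => Ff x s := by
    filter_upwards [ae_pos μ hsupp] with s hs
    exact (Ff_pos hs).le
  rw [Q0, integral_pos_iff_support_of_nonneg_ae hnn hi]
  have h1 : μ (Ioi 0) = 1 := by
    have h := measure_compl (μ := μ) (s := Iic (0:ℝ)) measurableSet_Iic (measure_ne_top μ _)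
    rw [hsupp, compl_Iic] at h
    simpa using h
  have hsub : Ioi (0:ℝ) ⊆ Function.support (fun s => Ff x s) :=
    fun s hs => (Ff_pos hs).ne'
  calc (0:ℝ≥0∞) < 1 := zero_lt_one
    _ = μ (Ioi 0) := h1.symm
    _ ≤ μ (Function.support fun s => Ff x s) := measure_mono hsub

lemma Q1_nonpos (hsupp : μ (Iic 0) = 0) {x : ℝ} : Q1 μ x ≤ 0 := by
  rw [Q1]
  apply integral_nonpos_of_ae
  filter_upwards [ae_pos μ hsupp] with s hs
  have h : 0 < 1/(4*s) * Ff x s := mul_pos (by positivity) (Ff_pos hs)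
  show -(1/(4*s) * Ff x s) ≤ 0
  linarith

lemma Q2_nonneg (hsupp : μ (Iic 0) = 0) {x : ℝ} : 0 ≤ Q2 μ x := by
  rw [Q2]
  apply integral_nonneg_of_ae
  filter_upwards [ae_pos μ hsupp] with s hs
  exact (mul_pos (by positivity) (Ff_pos (x := x) hs)).le

lemma cauchy_schwarz (hsupp : μ (Iic 0) = 0)
    (hint : Integrable (fun s : ℝ => s ^ (-(5 : ℝ)/2)) μ)
    {x : ℝ} (hx : 0 ≤ x) : (Q1 μ x)^2 ≤ Q0 μ x * Q2 μ x := by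
  set f : ℝ → ℝ := fun s => Real.sqrt (Ff x s) with hf
  set g : ℝ → ℝ := fun s => Real.sqrt (1/(16*s^2) * Ff x s) with hg
  have hconj : Real.HolderConjugate 2 2 := Real.holderConjugate_iff.mpr ⟨one_lt_two, by norm_num⟩
  have hfm : AEStronglyMeasurable f μ := ((measF x).sqrt).aestronglyMeasurable
  have hgm : AEStronglyMeasurable g μ := by
    apply Measurable.aestronglyMeasurable
    apply Measurable.sqrt
    unfold Ff; fun_prop
  have hMf : MemLp f 2 μ := by
    rw [memLp_two_iff_integrable_sq hfm]
    apply (intF hsupp hint hx).congr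
    filter_upwards [ae_pos μ hsupp] with s hs
    rw [hf]
    exact (Real.sq_sqrt (Ff_pos hs).le).symm
  have hMg : MemLp g 2 μ := by
    rw [memLp_two_iff_integrable_sq hgm]
    apply (intF2 hsupp hint hx).congr
    filter_upwards [ae_pos μ hsupp] with s hs
    rw [hg]
    exact (Real.sq_sqrt (mul_pos (by positivity) (Ff_pos hs)).le).symm
  have hfnn : 0 ≤ᵐ[μ] f := Filter.Eventually.of_forall fun s => Real.sqrt_nonneg _
  have hgnn : 0 ≤ᵐ[μ] g := Filter.Eventually.of_forall fun s => Real.sqrt_nonneg _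
  have h2e : ENNReal.ofReal (2:ℝ) = 2 := by
    rw [ENNReal.ofReal_ofNat]
  rw [← h2e] at hMf hMg
  have key := integral_mul_le_Lp_mul_Lq_of_nonneg hconj hfnn hgnn hMf hMg
  have hfg : ∫ s, f s * g s ∂μ = -(Q1 μ x) := by
    rw [Q1, integral_neg, neg_neg]
    apply integral_congr_ae
    filter_upwards [ae_pos μ hsupp] with s hs
    rw [hf, hg, ← Real.sqrt_mul (Ff_pos hs).le]
    have : Ff x s * (1/(16*s^2) * Ff x s) = (1/(4*s) * Ff x s)^2 := by ring
    rw [this, Real.sqrt_sq (mul_pos (by positivity) (Ff_pos hs)).le]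
  have hf2 : ∫ s, f s ^ (2:ℝ) ∂μ = Q0 μ x := by
    rw [Q0]
    apply integral_congr_ae
    filter_upwards [ae_pos μ hsupp] with s hs
    rw [hf, Real.rpow_two, Real.sq_sqrt (Ff_pos hs).le]
  have hg2 : ∫ s, g s ^ (2:ℝ) ∂μ = Q2 μ x := by
    rw [Q2]
    apply integral_congr_ae
    filter_upwards [ae_pos μ hsupp] with s hs
    rw [hg, Real.rpow_two, Real.sq_sqrt (mul_pos (by positivity) (Ff_pos hs)).le]
  rw [hfg, hf2, hg2] at key
  have hQ0 : 0 ≤ Q0 μ x := (Q0_pos hsupp hint hx).le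
  have hQ2 : 0 ≤ Q2 μ x := Q2_nonneg hsupp
  rw [← Real.sqrt_eq_rpow, ← Real.sqrt_eq_rpow] at key
  have h1 : -(Q1 μ x) ≥ 0 := by linarith [Q1_nonpos (μ := μ) hsupp (x := x)]
  have h2 := mul_self_le_mul_self h1 key
  calc (Q1 μ x)^2 = -(Q1 μ x) * -(Q1 μ x) := by ring
    _ ≤ (Real.sqrt (Q0 μ x) * Real.sqrt (Q2 μ x)) * (Real.sqrt (Q0 μ x) * Real.sqrt (Q2 μ x)) := h2
    _ = (Real.sqrt (Q0 μ x) * Real.sqrt (Q0 μ x)) * (Real.sqrt (Q2 μ x) * Real.sqrt (Q2 μ x)) := by ring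
    _ = Q0 μ x * Q2 μ x := by rw [Real.mul_self_sqrt hQ0, Real.mul_self_sqrt hQ2]

lemma exp_bound {c u : ℝ} (hc : 0 < c) (hu : 0 ≤ u) : u * Real.exp (-(c*u)) ≤ 1/c := by
  have h1 : c*u ≤ Real.exp (c*u) := by linarith [Real.add_one_le_exp (c*u)]
  have h3 : u ≤ 1/c * Real.exp (c*u) := by
    calc u = 1/c * (c*u) := by field_simp
      _ ≤ 1/c * Real.exp (c*u) := mul_le_mul_of_nonneg_left h1 (by positivity)
  calc u * Real.exp (-(c*u))
      ≤ (1/c * Real.exp (c*u)) * Real.exp (-(c*u)) :=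
        mul_le_mul_of_nonneg_right h3 (Real.exp_pos _).le
    _ = 1/c := by rw [mul_assoc, ← Real.exp_add]; simp

/-- pointwise bound for the product function -/
lemma H_le {s : ℝ} (hs : 0 < s) (x : ℝ) :
    4*x^2 * (1/(16*s^2) * Ff (x^2) s)
      ≤ ((4*π*s) ^ (-(1:ℝ)/2) * (2/s)) * Real.exp (-(1/(8*s)) * x^2) := by
  have hk : (0:ℝ) < (4*π*s) ^ (-(1:ℝ)/2) := Real.rpow_pos_of_pos (by positivity) _
  have hsplit : Real.exp (-x^2 / (4*s)) =
      Real.exp (-(1/(8*s)) * x^2) * Real.exp (-(1/(8*s)) * x^2) := by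
    rw [← Real.exp_add]; congr 1; field_simp; ring
  have hxe : x^2 * Real.exp (-(1/(8*s)) * x^2) ≤ 8*s := by
    have h := exp_bound (c := 1/(8*s)) (u := x^2) (by positivity) (sq_nonneg x)
    have e1 : -(1/(8*s) * x^2) = -(1/(8*s)) * x^2 := by ring
    rw [e1] at h
    calc x^2 * Real.exp (-(1/(8*s)) * x^2) ≤ 1/(1/(8*s)) := h
      _ = 8*s := by field_simp
  have expnn : (0:ℝ) ≤ Real.exp (-(1/(8*s)) * x^2) := (Real.exp_pos _).le
  calc 4*x^2 * (1/(16*s^2) * Ff (x^2) s)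
      = ((4*π*s) ^ (-(1:ℝ)/2) * (1/(4*s^2))) *
          (x^2 * Real.exp (-(1/(8*s)) * x^2)) * Real.exp (-(1/(8*s)) * x^2) := by
        unfold Ff; rw [hsplit]; ring
    _ ≤ ((4*π*s) ^ (-(1:ℝ)/2) * (1/(4*s^2))) * (8*s) * Real.exp (-(1/(8*s)) * x^2) := by
        apply mul_le_mul_of_nonneg_right _ expnn
        apply mul_le_mul_of_nonneg_left hxe (by positivity)
    _ = ((4*π*s) ^ (-(1:ℝ)/2) * (2/s)) * Real.exp (-(1/(8*s)) * x^2) := by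
        field_simp; ring

lemma intH (hsupp : μ (Iic 0) = 0) (hint : Integrable (fun s : ℝ => s ^ (-(5 : ℝ)/2)) μ) :
    Integrable (fun z : ℝ × ℝ => 4*z.1^2 * (1/(16*z.2^2) * Ff (z.1^2) z.2))
      ((volume : Measure ℝ).prod μ) := by
  have hmeas : AEStronglyMeasurable
      (fun z : ℝ × ℝ => 4*z.1^2 * (1/(16*z.2^2) * Ff (z.1^2) z.2))
      ((volume : Measure ℝ).prod μ) := by
    apply Measurable.aestronglyMeasurable
    unfold Ff; fun_prop
  rw [integrable_prod_iff' hmeas]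
  constructor
  · -- for a.e. s, integrable in x
    filter_upwards [ae_pos μ hsupp] with s hs
    have hb : (0:ℝ) < 1/(8*s) := by positivity
    have hgauss := (integrable_exp_neg_mul_sq hb).const_mul ((4*π*s) ^ (-(1:ℝ)/2) * (2/s))
    apply hgauss.mono'
    · apply Measurable.aestronglyMeasurable
      unfold Ff; fun_prop
    · refine Filter.Eventually.of_forall fun x => ?_
      have hnn : (0:ℝ) ≤ 4*x^2 * (1/(16*s^2) * Ff (x^2) s) := by
        have := Ff_pos (x := x^2) hs
        positivity
      rw [Real.norm_eq_abs, abs_of_nonneg hnn]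
      exact H_le hs x
  · -- integrable in s of the x-integral of norms
    have hb2 : Integrable (fun s : ℝ => (2 * Real.sqrt 2) * (1 + s ^ (-(5:ℝ)/2))) μ :=
      ((integrable_const 1).add hint).const_mul _
    apply hb2.mono'
    · exact hmeas.prod_swap.norm.integral_prod_right'
    · filter_upwards [ae_pos μ hsupp] with s hs
      have hb : (0:ℝ) < 1/(8*s) := by positivity
      have h4pis : (0:ℝ) < 4*π*s := by positivity
      have hk : (0:ℝ) < (4*π*s) ^ (-(1:ℝ)/2) := Real.rpow_pos_of_pos h4pis _
      have hgauss := (integrable_exp_neg_mul_sq hb).const_mul ((4*π*s) ^ (-(1:ℝ)/2) * (2/s))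
      have hintx : Integrable (fun x : ℝ => 4*x^2 * (1/(16*s^2) * Ff (x^2) s)) volume := by
        apply hgauss.mono'
        · apply Measurable.aestronglyMeasurable
          unfold Ff; fun_prop
        · refine Filter.Eventually.of_forall fun x => ?_
          have hnn : (0:ℝ) ≤ 4*x^2 * (1/(16*s^2) * Ff (x^2) s) := by
            have := Ff_pos (x := x^2) hs
            positivity
          rw [Real.norm_eq_abs, abs_of_nonneg hnn]
          exact H_le hs x
      have hA : (∫ x : ℝ, ‖4*x^2 * (1/(16*s^2) * Ff (x^2) s)‖)
          = ∫ x : ℝ, 4*x^2 * (1/(16*s^2) * Ff (x^2) s) := by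
        apply integral_congr_ae
        refine Filter.Eventually.of_forall fun x => ?_
        have hnn : (0:ℝ) ≤ 4*x^2 * (1/(16*s^2) * Ff (x^2) s) := by
          have := Ff_pos (x := x^2) hs
          positivity
        simp only [Real.norm_eq_abs, abs_of_nonneg hnn]
      have hAnn : (0:ℝ) ≤ ∫ x : ℝ, 4*x^2 * (1/(16*s^2) * Ff (x^2) s) :=
        integral_nonneg fun x => by
          have := Ff_pos (x := x^2) hs
          positivity
      have hAB : (∫ x : ℝ, 4*x^2 * (1/(16*s^2) * Ff (x^2) s))
          ≤ ∫ x : ℝ, ((4*π*s) ^ (-(1:ℝ)/2) * (2/s)) * Real.exp (-(1/(8*s)) * x^2) := by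
        apply integral_mono hintx hgauss
        intro x
        exact H_le hs x
      have hBval : (∫ x : ℝ, ((4*π*s) ^ (-(1:ℝ)/2) * (2/s)) * Real.exp (-(1/(8*s)) * x^2))
          = (2 * Real.sqrt 2) * s⁻¹ := by
        rw [integral_const_mul, integral_gaussian]
        have h8 : π / (1/(8*s)) = 2 * (4*π*s) := by field_simp; ring
        rw [h8, Real.sqrt_mul (by norm_num : (0:ℝ) ≤ 2)]
        have hrw : (4*π*s) ^ (-(1:ℝ)/2) = (Real.sqrt (4*π*s))⁻¹ := by
          rw [Real.sqrt_eq_rpow, ← Real.rpow_neg h4pis.le]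
          norm_num
        rw [hrw]
        have hsq : Real.sqrt (4*π*s) ≠ 0 := (Real.sqrt_pos.2 h4pis).ne'
        field_simp
      show ‖∫ x : ℝ, ‖4*x^2 * (1/(16*s^2) * Ff (x^2) s)‖‖ ≤ (2 * Real.sqrt 2) * (1 + s ^ (-(5:ℝ)/2))
      rw [hA, Real.norm_eq_abs, abs_of_nonneg hAnn]
      have hfinal : (2 * Real.sqrt 2) * s⁻¹ ≤ (2 * Real.sqrt 2) * (1 + s ^ (-(5:ℝ)/2)) := by
        apply mul_le_mul_of_nonneg_left _ (by positivity)
        have h := pow_bound (r := 1) zero_le_one (by norm_num) hs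
        rw [Real.rpow_neg_one] at h
        exact h
      linarith [hAB.trans_eq hBval]

lemma intG (hsupp : μ (Iic 0) = 0) (hint : Integrable (fun s : ℝ => s ^ (-(5 : ℝ)/2)) μ) :
    Integrable (fun x : ℝ => 4*x^2 * Q2 μ (x^2)) volume := by
  have h := (intH hsupp hint).integral_prod_left
  refine h.congr (Filter.Eventually.of_forall fun x => ?_)
  show (∫ s, 4*x^2 * (1/(16*s^2) * Ff (x^2) s) ∂μ) = 4*x^2 * Q2 μ (x^2)
  rw [Q2]
  exact integral_const_mul _ _

end FisherAux

open FisherAux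

/-- Let `μ` be a probability measure on `(0,∞)` with `∫ s^{-5/2} μ(ds) < ∞`, let
`q(x) = ∫₀^∞ (4πs)^{-1/2} e^{-x/(4s)} μ(ds)` and `p(x) = q(x²)`. Then
`∫_ℝ p'(x)²/p(x) dx ≤ 8 ∫₀^∞ √x · q''(x) dx`. -/
theorem fisher_integral_le_eight_int_sqrt_q''
    (μ : Measure ℝ) [IsProbabilityMeasure μ]
    (hsupp : μ (Iic 0) = 0)
    (hint : Integrable (fun s : ℝ => s ^ (-(5 : ℝ)/2)) μ)
    (q p : ℝ → ℝ)
    (hq : ∀ x : ℝ, q x = ∫ s, (4 * π * s) ^ (-(1 : ℝ)/2) * exp (-x / (4 * s)) ∂μ)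
    (hp : ∀ x : ℝ, p x = q (x ^ 2)) :
    ∫ x : ℝ, (deriv p x) ^ 2 / p x
      ≤ 8 * ∫ x in Ioi (0 : ℝ), Real.sqrt x * deriv (deriv q) x := by
  have hqQ : q = Q0 μ := funext fun x => by rw [hq x]; rfl
  have hpQ : p = fun y : ℝ => Q0 μ (y^2) := funext fun y => by rw [hp y, hqQ]
  have hderivq : ∀ x ∈ Ioi (0:ℝ), deriv q x = Q1 μ x := fun x hx => by
    rw [hqQ]; exact (hasDerivAt_Q0 hsupp hint hx).deriv
  have hdd : ∀ x ∈ Ioi (0:ℝ), deriv (deriv q) x = Q2 μ x := fun x hx => by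
    have hev : deriv q =ᶠ[nhds x] Q1 μ := by
      filter_upwards [Ioi_mem_nhds hx] with y hy
      exact hderivq y hy
    rw [hev.deriv_eq]
    exact (hasDerivAt_Q1 hsupp hint hx).deriv
  set I := ∫ x in Ioi (0:ℝ), Real.sqrt x * Q2 μ x with hI
  have hRHS : (∫ x in Ioi (0:ℝ), Real.sqrt x * deriv (deriv q) x) = I := by
    apply setIntegral_congr_fun measurableSet_Ioi
    intro x hx
    show Real.sqrt x * deriv (deriv q) x = Real.sqrt x * Q2 μ x
    rw [hdd x hx]
  have hI0 : 0 ≤ I := by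
    apply setIntegral_nonneg measurableSet_Ioi
    intro x hx
    exact mul_nonneg (Real.sqrt_nonneg _) (Q2_nonneg hsupp)
  have hsub : (∫ x in Ioi (0:ℝ), 2*x^2 * Q2 μ (x^2)) = I := by
    have h := integral_comp_rpow_Ioi (fun y => Real.sqrt y * Q2 μ y) (p := 2) two_ne_zero
    rw [hI]
    refine Eq.trans ?_ h
    apply setIntegral_congr_fun measurableSet_Ioi
    intro x hx
    have hx0 : (0:ℝ) < x := hx
    have h2 : x ^ (2:ℝ) = x^2 := by
      rw [show (2:ℝ) = ((2:ℕ):ℝ) by norm_num, Real.rpow_natCast]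
    have h1 : x ^ ((2:ℝ)-1) = x := by
      norm_num
    show 2*x^2 * Q2 μ (x^2) = (|(2:ℝ)| * x ^ ((2:ℝ)-1)) • (Real.sqrt (x^(2:ℝ)) * Q2 μ (x^(2:ℝ)))
    rw [h2, h1, Real.sqrt_sq hx0.le, smul_eq_mul]
    rw [abs_of_pos (by norm_num : (0:ℝ) < 2)]
    ring
  have heven : (∫ x : ℝ, 4*x^2 * Q2 μ (x^2)) = 4 * I := by
    have h := integral_comp_abs (f := fun t => 4*t^2 * Q2 μ (t^2))
    simp only [sq_abs] at h
    have hR : (∫ x in Ioi (0:ℝ), 4*x^2 * Q2 μ (x^2)) = 2 * I := by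
      calc ∫ x in Ioi (0:ℝ), 4*x^2*Q2 μ (x^2)
          = ∫ x in Ioi (0:ℝ), 2 * (2*x^2*Q2 μ (x^2)) := by congr 1; funext x; ring
        _ = 2 * ∫ x in Ioi (0:ℝ), 2*x^2*Q2 μ (x^2) := integral_const_mul _ _
        _ = 2 * I := by rw [hsub]
    rw [h, hR]; ring
  have hf0 : 0 ≤ᵐ[(volume : Measure ℝ)] fun x : ℝ => (deriv p x)^2 / p x := by
    refine Filter.Eventually.of_forall fun x => ?_
    have hppos : 0 < p x := by rw [hpQ]; exact Q0_pos hsupp hint (sq_nonneg x)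
    positivity
  have hne : ∀ᵐ x : ℝ, x ≠ (0:ℝ) := by
    rw [MeasureTheory.ae_iff]
    have hset : {x : ℝ | ¬ x ≠ 0} = {(0:ℝ)} := by ext y; simp
    rw [hset]
    exact measure_singleton 0
  have hle : (fun x : ℝ => (deriv p x)^2 / p x) ≤ᵐ[(volume : Measure ℝ)]
      fun x => 4*x^2 * Q2 μ (x^2) := by
    filter_upwards [hne] with x hx
    have hx2 : (0:ℝ) < x^2 := by positivity
    have hder : deriv p x = Q1 μ (x^2) * (2*x) := by
      rw [hpQ]
      have hpow : HasDerivAt (fun y : ℝ => y^2) (2*x) x := by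
        simpa using hasDerivAt_pow 2 x
      have hcomp := HasDerivAt.comp (h := fun y : ℝ => y^2) (h₂ := Q0 μ) x (hasDerivAt_Q0 hsupp hint hx2) hpow
      exact hcomp.deriv
    have hpx : p x = Q0 μ (x^2) := by rw [hpQ]
    show (deriv p x)^2 / p x ≤ 4*x^2 * Q2 μ (x^2)
    rw [hder, hpx, div_le_iff₀ (Q0_pos hsupp hint hx2.le)]
    have hCS := cauchy_schwarz hsupp hint (x := x^2) hx2.le
    have h4 := mul_le_mul_of_nonneg_left hCS (show (0:ℝ) ≤ 4*x^2 by positivity)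
    calc (Q1 μ (x^2)*(2*x))^2 = 4*x^2 * (Q1 μ (x^2))^2 := by ring
      _ ≤ 4*x^2 * (Q0 μ (x^2) * Q2 μ (x^2)) := h4
      _ = 4*x^2*Q2 μ (x^2) * Q0 μ (x^2) := by ring
  have hmain := integral_mono_of_nonneg hf0 (intG hsupp hint) hle
  calc ∫ x : ℝ, (deriv p x)^2 / p x
      ≤ ∫ x : ℝ, 4*x^2*Q2 μ (x^2) := hmain
    _ = 4 * I := heven
    _ ≤ 8 * I := by linarith
    _ = 8 * ∫ x in Ioi (0:ℝ), Real.sqrt x * deriv (deriv q) x := by rw [hRHS]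
end

section
/- Let μ be a probability measure on (0,∞) with Laplace transform ∫_0^∞ e^{-rs} μ(ds) = e^{-F(r)}, and suppose ∫_0^∞ s^{-5/2} μ(ds) < ∞. Define p(x) = ∫_0^∞ (4πs)^{-1/2} exp(-x²/(4s)) μ(ds). Then ∫_ℝ p'(x)²/p(x) dx ≤ 2 ∫_0^∞ e^{-F(r)} dr. -/
open Set MeasureTheory Real
set_option maxHeartbeats 1000000


noncomputable def gf (x s : ℝ) : ℝ := (4 * π * s) ^ (-(1:ℝ)/2) * Real.exp (-(x^2) / (4*s))
noncomputable def gf' (x s : ℝ) : ℝ := gf x s * (-(2*x)/(4*s))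

lemma gf_pos {x s : ℝ} (hs : 0 < s) : 0 < gf x s :=
  mul_pos (rpow_pos_of_pos (by positivity) _) (exp_pos _)

lemma gf_split {s : ℝ} (hs : 0 < s) :
    (4 * π * s) ^ (-(1:ℝ)/2) = (4*π) ^ (-(1:ℝ)/2) * s ^ (-(1:ℝ)/2) := by
  rw [← Real.mul_rpow (by positivity) hs.le]

lemma gf_le {x s : ℝ} (hs : 0 < s) : gf x s ≤ (4*π) ^ (-(1:ℝ)/2) * s ^ (-(1:ℝ)/2) := by
  have he : Real.exp (-(x^2) / (4*s)) ≤ 1 := by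
    rw [exp_le_one_iff, neg_div]
    exact neg_nonpos.mpr (by positivity)
  calc gf x s = ((4*π) ^ (-(1:ℝ)/2) * s ^ (-(1:ℝ)/2)) * Real.exp (-(x^2) / (4*s)) := by
        rw [gf, gf_split hs]
    _ ≤ ((4*π) ^ (-(1:ℝ)/2) * s ^ (-(1:ℝ)/2)) * 1 :=
        mul_le_mul_of_nonneg_left he (by positivity)
    _ = _ := mul_one _

lemma gf_hasDeriv {s : ℝ} (hs : 0 < s) (x : ℝ) :
    HasDerivAt (fun y => gf y s) (gf' x s) x := by
  have h1 : HasDerivAt (fun y : ℝ => -(y^2) / (4*s)) (-(2*x) / (4*s)) x := by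
    simpa using ((hasDerivAt_pow 2 x).neg.div_const (4*s))
  have := (h1.exp).const_mul ((4 * π * s) ^ (-(1:ℝ)/2))
  simpa [gf, gf', mul_assoc] using this

lemma gf'_norm {x s : ℝ} (hs : 0 < s) :
    ‖gf' x s‖ = gf x s * (|x| / (2*s)) := by
  rw [gf', Real.norm_eq_abs, abs_mul, abs_of_nonneg (gf_pos hs).le]
  congr 1
  rw [abs_div, abs_neg, abs_mul, abs_of_nonneg (by positivity : (0:ℝ) ≤ (4*s)),
    abs_of_nonneg (by norm_num : (0:ℝ) ≤ (2:ℝ))]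
  field_simp; ring

lemma gf_meas_x (x : ℝ) : Measurable (gf x) := by unfold gf; fun_prop

lemma gf'_meas_x (x : ℝ) : Measurable (gf' x) := by unfold gf' gf; fun_prop

lemma gauss_sq_moment {b : ℝ} (hb : 0 < b) :
    ∫ x : ℝ, x ^ 2 * exp (-b * x ^ 2) = Real.sqrt π / 2 * b ^ (-(3:ℝ)/2) := by
  have h0 : (fun x : ℝ => x ^ 2 * exp (-b * x ^ 2)) = fun x : ℝ => |x| ^ 2 * exp (-b * |x| ^ 2) := by
    ext x; rw [sq_abs]
  rw [h0, integral_comp_abs (f := fun x : ℝ => x ^ 2 * exp (-b * x ^ 2))]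
  have h1 : ∫ x in Ioi (0:ℝ), x ^ 2 * exp (-b * x ^ 2)
      = ∫ x in Ioi (0:ℝ), x ^ (2:ℝ) * exp (-b * x ^ (2:ℝ)) := by
    refine setIntegral_congr_fun measurableSet_Ioi (fun x hx => ?_)
    rw [show (2:ℝ) = ((2:ℕ):ℝ) by norm_num, rpow_natCast]
  rw [h1, integral_rpow_mul_exp_neg_mul_rpow two_pos (by norm_num) hb]
  have h2 : ((2:ℝ) + 1) / 2 = 1/2 + 1 := by norm_num
  rw [h2, Real.Gamma_add_one (by norm_num), Real.Gamma_one_half_eq]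
  rw [show (-((2:ℝ)+1)/2) = (-(3:ℝ)/2) by norm_num]
  ring

section main

variable {μ : Measure ℝ} [IsProbabilityMeasure μ]
  (hae : ∀ᵐ s ∂μ, 0 < s)
  (hint : Integrable (fun s : ℝ => s ^ (-(5 : ℝ)/2)) μ)

include hae hint in
lemma pow_int {e : ℝ} (h0 : e ≤ 0) (h5 : -(5:ℝ)/2 ≤ e) :
    Integrable (fun s : ℝ => s ^ e) μ := by
  refine Integrable.mono' (hint.add (integrable_const 1)) ?_ ?_
  · exact (Measurable.aestronglyMeasurable (by fun_prop))
  · filter_upwards [hae] with s hs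
    rw [Real.norm_eq_abs, abs_of_nonneg (rpow_nonneg hs.le _)]
    simp only [Pi.add_apply]
    rcases le_total s 1 with h | h
    · have h3 : s ^ e ≤ s ^ (-(5:ℝ)/2) := rpow_le_rpow_of_exponent_ge hs h h5
      linarith
    · have h3 : s ^ e ≤ 1 := by
        calc s ^ e ≤ s ^ (0:ℝ) := rpow_le_rpow_of_exponent_le h h0
        _ = 1 := rpow_zero s
      have h2 : (0:ℝ) ≤ s ^ (-(5:ℝ)/2) := rpow_nonneg hs.le _
      linarith

include hae hint in
lemma gf_integrable (x : ℝ) : Integrable (gf x) μ := by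
  refine Integrable.mono' ((pow_int hae hint (by norm_num) (by norm_num)
    (e := -(1:ℝ)/2)).const_mul ((4*π) ^ (-(1:ℝ)/2))) ((gf_meas_x x).aestronglyMeasurable) ?_
  filter_upwards [hae] with s hs
  rw [Real.norm_eq_abs, abs_of_nonneg (gf_pos hs).le]
  exact gf_le hs

include hae hint in
lemma gf_sq_integrable (x : ℝ) :
    Integrable (fun s => x^2/(4*s^2) * gf x s) μ := by
  refine Integrable.mono' ((pow_int hae hint (by norm_num) (by norm_num)
    (e := -(5:ℝ)/2)).const_mul (x^2/4 * (4*π) ^ (-(1:ℝ)/2)))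
    (Measurable.aestronglyMeasurable (by unfold gf; fun_prop)) ?_
  filter_upwards [hae] with s hs
  rw [Real.norm_eq_abs, abs_of_nonneg (mul_nonneg (by positivity) (gf_pos hs).le)]
  have h52 : s ^ (-(5:ℝ)/2) = s ^ (-(1:ℝ)/2) * (s^2)⁻¹ := by
    rw [← Real.rpow_natCast s 2, ← Real.rpow_neg hs.le, ← Real.rpow_add hs]
    norm_num
  calc x^2/(4*s^2) * gf x s ≤ x^2/(4*s^2) * ((4*π) ^ (-(1:ℝ)/2) * s ^ (-(1:ℝ)/2)) :=
        mul_le_mul_of_nonneg_left (gf_le hs) (by positivity)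
    _ = x^2/4 * (4*π) ^ (-(1:ℝ)/2) * (s ^ (-(1:ℝ)/2) * (s^2)⁻¹) := by field_simp
    _ = x^2/4 * (4*π) ^ (-(1:ℝ)/2) * s ^ (-(5:ℝ)/2) := by rw [h52]

include hae hint in
lemma gf'_integrable (x : ℝ) : Integrable (gf' x) μ := by
  refine Integrable.mono' ((pow_int hae hint (by norm_num) (by norm_num)
    (e := -(3:ℝ)/2)).const_mul (|x|/2 * (4*π) ^ (-(1:ℝ)/2)))
    ((gf'_meas_x x).aestronglyMeasurable) ?_
  filter_upwards [hae] with s hs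
  have h32 : s ^ (-(3:ℝ)/2) = s ^ (-(1:ℝ)/2) * s⁻¹ := by
    rw [← Real.rpow_neg_one s, ← Real.rpow_add hs]; norm_num
  rw [gf'_norm hs]
  calc gf x s * (|x|/(2*s)) ≤ ((4*π) ^ (-(1:ℝ)/2) * s ^ (-(1:ℝ)/2)) * (|x|/(2*s)) :=
        mul_le_mul_of_nonneg_right (gf_le hs) (by positivity)
    _ = |x|/2 * (4*π) ^ (-(1:ℝ)/2) * (s ^ (-(1:ℝ)/2) * s⁻¹) := by field_simp
    _ = |x|/2 * (4*π) ^ (-(1:ℝ)/2) * s ^ (-(3:ℝ)/2) := by rw [h32]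

include hae hint in
lemma p_hasDeriv (x₀ : ℝ) :
    HasDerivAt (fun y => ∫ s, gf y s ∂μ) (∫ s, gf' x₀ s ∂μ) x₀ := by
  refine (hasDerivAt_integral_of_dominated_loc_of_deriv_le
    (F := fun x s => gf x s) (F' := fun x s => gf' x s)
    (bound := fun s => ((|x₀|+1)/2 * (4*π) ^ (-(1:ℝ)/2)) * s ^ (-(3:ℝ)/2))
    (Metric.ball_mem_nhds x₀ one_pos)
    (Filter.Eventually.of_forall fun x => (gf_meas_x x).aestronglyMeasurable)
    (gf_integrable hae hint x₀)
    ((gf'_meas_x x₀).aestronglyMeasurable)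
    ?_ ((pow_int hae hint (by norm_num) (by norm_num)
      (e := -(3:ℝ)/2)).const_mul _) ?_).2
  · filter_upwards [hae] with s hs
    intro x hx
    have hxb : |x| ≤ |x₀| + 1 := by
      have := mem_ball_iff_norm.mp hx
      rw [Real.norm_eq_abs] at this
      calc |x| = |x₀ + (x - x₀)| := by ring_nf
        _ ≤ |x₀| + |x - x₀| := abs_add_le _ _
        _ ≤ |x₀| + 1 := by linarith
    have h32 : s ^ (-(3:ℝ)/2) = s ^ (-(1:ℝ)/2) * s⁻¹ := by
      rw [← Real.rpow_neg_one s, ← Real.rpow_add hs]; norm_num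
    rw [gf'_norm hs]
    calc gf x s * (|x|/(2*s)) ≤ ((4*π) ^ (-(1:ℝ)/2) * s ^ (-(1:ℝ)/2)) * ((|x₀|+1)/(2*s)) := by
          apply mul_le_mul (gf_le hs) _ (by positivity) (by positivity)
          exact div_le_div_of_nonneg_right hxb (by positivity) |>.trans_eq rfl
      _ = ((|x₀|+1)/2 * (4*π) ^ (-(1:ℝ)/2)) * (s ^ (-(1:ℝ)/2) * s⁻¹) := by field_simp
      _ = ((|x₀|+1)/2 * (4*π) ^ (-(1:ℝ)/2)) * s ^ (-(3:ℝ)/2) := by rw [h32]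
  · filter_upwards [hae] with s hs
    intro x _
    exact gf_hasDeriv hs x

include hae hint in
lemma P_pos (x : ℝ) : 0 < ∫ s, gf x s ∂μ := by
  rw [integral_pos_iff_support_of_nonneg_ae
    (by filter_upwards [hae] with s hs; exact (gf_pos hs).le) (gf_integrable hae hint x)]
  have h0 : μ {s : ℝ | ¬ (0 < s)} = 0 := ae_iff.mp hae
  have hns : μ (Function.support (gf x))ᶜ = 0 := by
    refine measure_mono_null (fun s hsc => ?_) h0
    intro hpos
    simp only [mem_compl_iff, Function.mem_support, not_not] at hsc
    exact absurd hsc (gf_pos hpos).ne'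
  have h3 := measure_union_le (μ := μ) (Function.support (gf x)) (Function.support (gf x))ᶜ
  rw [union_compl_self, measure_univ, hns, add_zero] at h3
  exact lt_of_lt_of_le (by norm_num) h3

include hae hint in
lemma CS_bound (x : ℝ) :
    (∫ s, gf' x s ∂μ)^2 ≤ (∫ s, x^2/(4*s^2) * gf x s ∂μ) * (∫ s, gf x s ∂μ) := by
  set J := ∫ s, x^2/(4*s^2) * gf x s ∂μ with hJdef
  set P := ∫ s, gf x s ∂μ with hPdef
  have hJ0 : 0 ≤ J := integral_nonneg_of_ae
    (by filter_upwards [hae] with s hs; exact mul_nonneg (by positivity) (gf_pos hs).le)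
  have hP0 : 0 ≤ P := integral_nonneg_of_ae
    (by filter_upwards [hae] with s hs; exact (gf_pos hs).le)
  set f : ℝ → ℝ := fun s => |x|/(2*s) * Real.sqrt (gf x s) with hfdef
  set g : ℝ → ℝ := fun s => Real.sqrt (gf x s) with hgdef
  have hfm : AEStronglyMeasurable f μ := Measurable.aestronglyMeasurable (by unfold f; unfold gf; fun_prop)
  have hgm : AEStronglyMeasurable g μ := Measurable.aestronglyMeasurable (by unfold g; unfold gf; fun_prop)
  have hf2 : ∀ᵐ s ∂μ, f s^2 = x^2/(4*s^2) * gf x s := by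
    filter_upwards [hae] with s hs
    rw [hfdef]
    rw [mul_pow, sq_sqrt (gf_pos hs).le, div_pow, sq_abs, mul_pow]
    norm_num
  have hg2 : ∀ᵐ s ∂μ, g s^2 = gf x s := by
    filter_upwards [hae] with s hs
    rw [hgdef, sq_sqrt (gf_pos hs).le]
  have hfL : MemLp f (ENNReal.ofReal 2) μ := by
    rw [show ENNReal.ofReal 2 = 2 by norm_num]
    exact (memLp_two_iff_integrable_sq hfm).mpr
      ((gf_sq_integrable hae hint x).congr (hf2.mono fun s h => h.symm))
  have hgL : MemLp g (ENNReal.ofReal 2) μ := by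
    rw [show ENNReal.ofReal 2 = 2 by norm_num]
    exact (memLp_two_iff_integrable_sq hgm).mpr
      ((gf_integrable hae hint x).congr (hg2.mono fun s h => h.symm))
  have hpq : Real.HolderConjugate 2 2 := Real.HolderConjugate.two_two
  have hCS := integral_mul_le_Lp_mul_Lq_of_nonneg hpq
    (by filter_upwards [hae] with s hs; exact mul_nonneg (by positivity) (Real.sqrt_nonneg _))
    (Filter.Eventually.of_forall fun s => Real.sqrt_nonneg _) hfL hgL
  have hrp : ∀ y : ℝ, y ^ (2:ℝ) = y^2 := fun y => by
    rw [show (2:ℝ) = ((2:ℕ):ℝ) by norm_num, Real.rpow_natCast]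
  have hJint : ∫ s, f s ^ (2:ℝ) ∂μ = J := by
    rw [hJdef]
    refine integral_congr_ae ?_
    filter_upwards [hf2] with s h2
    rw [hrp, h2]
  have hPint : ∫ s, g s ^ (2:ℝ) ∂μ = P := by
    rw [hPdef]
    refine integral_congr_ae ?_
    filter_upwards [hg2] with s h2
    rw [hrp, h2]
  rw [hJint, hPint] at hCS
  have hnorm : ∫ s, ‖gf' x s‖ ∂μ = ∫ s, f s * g s ∂μ := by
    refine integral_congr_ae ?_
    filter_upwards [hae] with s hs
    rw [gf'_norm hs, hfdef, hgdef]
    rw [mul_assoc, Real.mul_self_sqrt (gf_pos hs).le]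
    ring
  have habs : |∫ s, gf' x s ∂μ| ≤ J ^ ((1:ℝ)/2) * P ^ ((1:ℝ)/2) := by
    calc |∫ s, gf' x s ∂μ| ≤ ∫ s, ‖gf' x s‖ ∂μ := by
          simpa [Real.norm_eq_abs] using norm_integral_le_integral_norm (fun s => gf' x s) (μ := μ)
      _ = ∫ s, f s * g s ∂μ := hnorm
      _ ≤ J ^ ((1:ℝ)/2) * P ^ ((1:ℝ)/2) := hCS
  calc (∫ s, gf' x s ∂μ)^2 = |∫ s, gf' x s ∂μ|^2 := (sq_abs _).symm
    _ ≤ (J ^ ((1:ℝ)/2) * P ^ ((1:ℝ)/2))^2 := pow_le_pow_left₀ (abs_nonneg _) habs 2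
    _ = J * P := by
        rw [mul_pow, ← Real.sqrt_eq_rpow, ← Real.sqrt_eq_rpow, sq_sqrt hJ0, sq_sqrt hP0]

lemma slice_rw {s : ℝ} (hs : 0 < s) (x : ℝ) :
    x^2/(4*s^2) * gf x s
      = ((4*π*s) ^ (-(1:ℝ)/2)/(4*s^2)) * (x^2 * exp (-(1/(4*s)) * x^2)) := by
  have harg : -(x^2)/(4*s) = -(1/(4*s)) * x^2 := by ring
  rw [gf, harg]; ring

lemma slice_integrable {s : ℝ} (hs : 0 < s) (x0 : ℝ) :
    Integrable (fun x : ℝ => x^2/(4*s^2) * gf x s) volume := by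
  have hb : 0 < 1/(4*s) := by positivity
  have h1 : Integrable (fun x : ℝ => x ^ 2 * exp (-(1/(4*s)) * x^2)) volume := by
    refine (integrable_rpow_mul_exp_neg_mul_sq hb (by norm_num : (-1:ℝ) < 2)).congr ?_
    refine Filter.Eventually.of_forall fun x => ?_
    show x ^ (2:ℝ) * exp (-(1/(4*s)) * x^2) = x ^ 2 * exp (-(1/(4*s)) * x^2)
    rw [show (2:ℝ) = ((2:ℕ):ℝ) by norm_num, Real.rpow_natCast]
  refine (h1.const_mul ((4*π*s) ^ (-(1:ℝ)/2)/(4*s^2))).congr ?_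
  exact Filter.Eventually.of_forall fun x => (slice_rw hs x).symm

lemma slice_integral {s : ℝ} (hs : 0 < s) :
    ∫ x : ℝ, x^2/(4*s^2) * gf x s = 1/(2*s) := by
  have hb : 0 < 1/(4*s) := by positivity
  rw [integral_congr_ae (Filter.Eventually.of_forall fun x => slice_rw hs x)]
  rw [integral_const_mul]
  have hmom : ∫ x : ℝ, x ^ 2 * exp (-(1/(4*s)) * x ^ 2) = Real.sqrt π / 2 * (1/(4*s)) ^ (-(3:ℝ)/2) :=
    gauss_sq_moment hb
  rw [hmom]
  have e1 : (1/(4*s)) ^ (-(3:ℝ)/2) = (4*s) ^ ((3:ℝ)/2) := by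
    rw [one_div, ← Real.rpow_neg_one (4*s), ← Real.rpow_mul (by positivity : (0:ℝ) ≤ 4*s)]
    norm_num
  have e2 : (4*s) ^ ((3:ℝ)/2) = (4:ℝ) ^ ((3:ℝ)/2) * s ^ ((3:ℝ)/2) :=
    Real.mul_rpow (by norm_num) hs.le
  have e3 : ((4:ℝ)*π) ^ (-(1:ℝ)/2) = (4:ℝ) ^ (-(1:ℝ)/2) * π ^ (-(1:ℝ)/2) :=
    Real.mul_rpow (by norm_num) pi_pos.le
  have h4 : (4:ℝ) ^ (-(1:ℝ)/2) * (4:ℝ) ^ ((3:ℝ)/2) = 4 := by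
    rw [← Real.rpow_add (by norm_num : (0:ℝ) < 4)]
    norm_num
  have hπ : π ^ (-(1:ℝ)/2) * Real.sqrt π = 1 := by
    rw [Real.sqrt_eq_rpow, ← Real.rpow_add pi_pos]
    norm_num
  have hss : s ^ (-(1:ℝ)/2) * s ^ ((3:ℝ)/2) = s := by
    rw [← Real.rpow_add hs]
    norm_num
  rw [gf_split hs, e1, e2, e3]
  calc (4:ℝ) ^ (-(1:ℝ)/2) * π ^ (-(1:ℝ)/2) * s ^ (-(1:ℝ)/2) / (4*s^2)
        * (Real.sqrt π / 2 * ((4:ℝ) ^ ((3:ℝ)/2) * s ^ ((3:ℝ)/2)))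
      = ((4:ℝ) ^ (-(1:ℝ)/2) * (4:ℝ) ^ ((3:ℝ)/2)) * (π ^ (-(1:ℝ)/2) * Real.sqrt π)
        * (s ^ (-(1:ℝ)/2) * s ^ ((3:ℝ)/2)) / (8*s^2) := by ring
    _ = 4 * 1 * s / (8*s^2) := by rw [h4, hπ, hss]
    _ = 1/(2*s) := by field_simp; ring

include hae hint in
lemma J_prod : Integrable (Function.uncurry (fun s x : ℝ => x^2/(4*s^2) * gf x s))
    (μ.prod volume) := by
  rw [integrable_prod_iff (Measurable.aestronglyMeasurable
    (by unfold Function.uncurry; unfold gf; fun_prop))]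
  constructor
  · filter_upwards [hae] with s hs
    exact slice_integrable hs 0
  · refine ((pow_int hae hint (by norm_num) (by norm_num) (e := (-1:ℝ))).const_mul (1/2)).congr ?_
    filter_upwards [hae] with s hs
    have hnn : ∀ x : ℝ, ‖x^2/(4*s^2) * gf x s‖ = x^2/(4*s^2) * gf x s := fun x =>
      norm_of_nonneg (mul_nonneg (by positivity) (gf_pos hs).le)
    simp only [Function.uncurry_apply_pair]
    rw [integral_congr_ae (Filter.Eventually.of_forall hnn), slice_integral hs,
      Real.rpow_neg_one]
    field_simp

include hae hint in
lemma J_int : Integrable (fun x : ℝ => ∫ s, x^2/(4*s^2) * gf x s ∂μ) volume := by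
  have h := (J_prod hae hint).integral_prod_right
  simpa only [Function.uncurry_apply_pair] using h

include hae hint in
lemma J_val : ∫ x : ℝ, (∫ s, x^2/(4*s^2) * gf x s ∂μ) = (1/2) * ∫ s, s⁻¹ ∂μ := by
  rw [← integral_integral_swap (J_prod hae hint), ← integral_const_mul]
  refine integral_congr_ae ?_
  filter_upwards [hae] with s hs
  rw [slice_integral hs]
  field_simp

lemma exp_slice {s : ℝ} (hs : 0 < s) : ∫ r in Ioi (0:ℝ), exp (-(r*s)) = s⁻¹ := by
  have h := integral_comp_mul_left_Ioi (fun r : ℝ => exp (-r)) 0 hs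
  simp only [mul_zero] at h
  rw [integral_exp_neg_Ioi_zero] at h
  calc ∫ r in Ioi (0:ℝ), exp (-(r*s)) = ∫ r in Ioi (0:ℝ), exp (-(s*r)) := by
        refine setIntegral_congr_fun measurableSet_Ioi fun r _ => ?_
        rw [mul_comm]
    _ = s⁻¹ := by rw [h]; simp

include hae hint in
lemma exp_prod : Integrable (Function.uncurry fun s r : ℝ => exp (-(r*s)))
    (μ.prod (volume.restrict (Ioi 0))) := by
  rw [integrable_prod_iff (Measurable.aestronglyMeasurable (by unfold Function.uncurry; fun_prop))]
  constructor
  · filter_upwards [hae] with s hs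
    have h1 := exp_neg_integrableOn_Ioi 0 hs
    refine h1.congr (Filter.Eventually.of_forall fun r => ?_)
    show exp (-s * r) = exp (-(r * s))
    congr 1
    ring
  · refine (pow_int hae hint (by norm_num) (by norm_num) (e := (-1:ℝ))).congr ?_
    filter_upwards [hae] with s hs
    have hnn : ∀ r : ℝ, ‖exp (-(r*s))‖ = exp (-(r*s)) := fun r => norm_of_nonneg (exp_pos _).le
    simp only [Function.uncurry_apply_pair]
    rw [integral_congr_ae (Filter.Eventually.of_forall hnn), exp_slice hs, Real.rpow_neg_one]

include hae hint in
lemma exp_val : ∫ r in Ioi (0:ℝ), (∫ s, exp (-(r*s)) ∂μ) = ∫ s, s⁻¹ ∂μ := by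
  rw [← integral_integral_swap (exp_prod hae hint)]
  refine integral_congr_ae ?_
  filter_upwards [hae] with s hs
  exact exp_slice hs

end main

/-- Let `μ` be a probability measure on `(0,∞)` with Laplace transform
`∫₀^∞ e^{-rs} μ(ds) = e^{-F(r)}` and `∫ s^{-5/2} μ(ds) < ∞`. Define
`p(x) = ∫₀^∞ (4πs)^{-1/2} exp(-x²/(4s)) μ(ds)`. Then
`∫_ℝ p'(x)²/p(x) dx ≤ 2 ∫₀^∞ e^{-F(r)} dr`. -/
theorem fisher_integral_le_two_int_exp_neg_F
    (μ : Measure ℝ) [IsProbabilityMeasure μ]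
    (hsupp : μ (Iic 0) = 0)
    (hint : Integrable (fun s : ℝ => s ^ (-(5 : ℝ)/2)) μ)
    (F : ℝ → ℝ)
    (hF : ∀ r > (0 : ℝ), ∫ s, exp (-(r * s)) ∂μ = exp (-F r))
    (p : ℝ → ℝ)
    (hp : ∀ x : ℝ, p x = ∫ s, (4 * π * s) ^ (-(1 : ℝ)/2) * exp (-(x ^ 2) / (4 * s)) ∂μ) :
    ∫ x : ℝ, (deriv p x) ^ 2 / p x ≤ 2 * ∫ r in Ioi (0 : ℝ), exp (-F r) := by
  have hae : ∀ᵐ s ∂μ, 0 < s := by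
    rw [ae_iff]
    refine measure_mono_null (fun s hs => ?_) hsupp
    simpa using hs
  have hx : ∀ x, p x = ∫ s, gf x s ∂μ := fun x => by rw [hp x]; rfl
  have hpfun : p = fun x => ∫ s, gf x s ∂μ := funext hx
  have hderiv : ∀ x, deriv p x = ∫ s, gf' x s ∂μ := fun x => by
    rw [hpfun]; exact (p_hasDeriv hae hint x).deriv
  have hI0 : (0:ℝ) ≤ ∫ s, s⁻¹ ∂μ := integral_nonneg_of_ae
    (by filter_upwards [hae] with s hs; positivity)
  have hptw : ∀ x, (deriv p x)^2 / p x ≤ ∫ s, x^2/(4*s^2) * gf x s ∂μ := by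
    intro x
    rw [hderiv x, hx x, div_le_iff₀ (P_pos hae hint x)]
    exact CS_bound hae hint x
  have hnn : ∀ x, 0 ≤ (deriv p x)^2 / p x := fun x =>
    div_nonneg (sq_nonneg _) (by rw [hx x]; exact (P_pos hae hint x).le)
  have hstep : ∫ x : ℝ, (deriv p x)^2 / p x ≤ ∫ x : ℝ, ∫ s, x^2/(4*s^2) * gf x s ∂μ :=
    integral_mono_of_nonneg (Filter.Eventually.of_forall hnn) (J_int hae hint)
      (Filter.Eventually.of_forall hptw)
  have hR : ∫ r in Ioi (0:ℝ), exp (-F r) = ∫ s, s⁻¹ ∂μ := by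
    rw [← exp_val hae hint]
    refine setIntegral_congr_fun measurableSet_Ioi fun r hr => ?_
    exact (hF r hr).symm
  calc ∫ x : ℝ, (deriv p x)^2 / p x ≤ ∫ x : ℝ, ∫ s, x^2/(4*s^2) * gf x s ∂μ := hstep
    _ = (1/2) * ∫ s, s⁻¹ ∂μ := J_val hae hint
    _ ≤ 2 * ∫ s, s⁻¹ ∂μ := by linarith
    _ = 2 * ∫ r in Ioi (0:ℝ), exp (-F r) := by rw [hR]
end
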